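/- Let u ∈ ℝ² be standard Gaussian and let x, x' ∈ ℝ² be unit vectors with angle η = arccos(x^T x') between them. Then E[ReLU(u^T x) · ReLU(u^T x')] = ((π − η) cos η + sin η)/(2π). -/

import Mathlib

open Matrix ProbabilityTheory MeasureTheory Real




lemma pdf_mul (a b : ℝ) : gaussianPDFReal 0 1 a * gaussianPDFReal 0 1 b
    = (2*π)⁻¹ * Real.exp (-((a^2+b^2)/2)) := by
  simp only [gaussianPDFReal, NNReal.coe_one, mul_one, sub_zero]
  have h : (√(2*π))⁻¹ * (√(2*π))⁻¹ = (2*π)⁻¹ := by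
    rw [← mul_inv, Real.mul_self_sqrt (by positivity)]
  rw [show -((a^2+b^2)/2) = -a^2/2 + -b^2/2 by ring, Real.exp_add, ← h]
  ring

lemma relu_mul (r A : ℝ) (hr : 0 ≤ r) : max (r*A) 0 = r * max A 0 := by
  rw [mul_max_of_nonneg _ _ hr, mul_zero]

lemma radial : ∫ r in Set.Ioi (0:ℝ), r^3 * Real.exp (-(r^2/2)) = 2 := by
  have hderiv : ∀ r ∈ Set.Ici (0:ℝ),
      HasDerivAt (fun r : ℝ => -((r^2+2) * Real.exp (-(r^2/2)))) (r^3 * Real.exp (-(r^2/2))) r := by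
    intro r _
    have h1 : HasDerivAt (fun r : ℝ => -(r^2/2)) (-r) r := by
      have := ((hasDerivAt_pow 2 r).div_const 2).neg
      exact this.congr_deriv (by norm_num)
    have h2 : HasDerivAt (fun r : ℝ => Real.exp (-(r^2/2))) (Real.exp (-(r^2/2)) * (-r)) r :=
      (Real.hasDerivAt_exp _).comp r h1
    have h3 : HasDerivAt (fun r : ℝ => r^2 + 2) (2*r) r := by
      simpa using (hasDerivAt_pow 2 r).add_const 2
    have := (h3.mul h2).neg
    refine this.congr_deriv ?_
    ring
  have hint : IntegrableOn (fun r : ℝ => r^3 * Real.exp (-(r^2/2))) (Set.Ioi 0) := by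
    have := integrableOn_rpow_mul_exp_neg_mul_sq (b := (1/2:ℝ)) (by norm_num) (s := 3) (by norm_num)
    refine this.congr_fun (fun r hr => ?_) measurableSet_Ioi
    beta_reduce
    rw [show (3:ℝ) = ((3:ℕ):ℝ) from by norm_num, Real.rpow_natCast]
    ring_nf
  have hlim : Filter.Tendsto (fun r : ℝ => -((r^2+2) * Real.exp (-(r^2/2)))) Filter.atTop (nhds 0) := by
    have h1 : Filter.Tendsto (fun r : ℝ => r^2/2) Filter.atTop Filter.atTop :=
      (Filter.tendsto_pow_atTop (by norm_num)).atTop_div_const (by norm_num)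
    have h2 : Filter.Tendsto (fun x : ℝ => 2*(x * Real.exp (-x)) + 2*Real.exp (-x)) Filter.atTop (nhds 0) := by
      have a := (tendsto_pow_mul_exp_neg_atTop_nhds_zero 1).const_mul (2:ℝ)
      have b := tendsto_exp_neg_atTop_nhds_zero.const_mul (2:ℝ)
      simpa using a.add b
    have := (h2.comp h1).neg
    simp only [Function.comp] at this
    convert this using 2 with r
    · ring
    · simp
  have := integral_Ioi_of_hasDerivAt_of_tendsto' (a := 0) (fun x hx => hderiv x hx) hint hlim
  rw [this]; norm_num

lemma middle (η : ℝ) : ∫ θ in (η - π/2)..(π/2), Real.cos θ * Real.cos (θ - η)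
    = ((π - η) * Real.cos η + Real.sin η)/2 := by
  have hderiv : ∀ θ ∈ Set.uIcc (η - π/2) (π/2),
      HasDerivAt (fun θ : ℝ => (Real.sin (2*θ - η)/2 + θ * Real.cos η)/2)
        (Real.cos θ * Real.cos (θ - η)) θ := by
    intro θ _
    have h1 : HasDerivAt (fun θ : ℝ => 2*θ - η) 2 θ := by
      simpa using ((hasDerivAt_id θ).const_mul 2).sub_const η
    have h2 : HasDerivAt (fun θ : ℝ => Real.sin (2*θ - η)) (Real.cos (2*θ-η) * 2) θ :=
      (Real.hasDerivAt_sin _).comp θ h1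
    have h3 : HasDerivAt (fun θ : ℝ => θ * Real.cos η) (Real.cos η) θ := by
      simpa using (hasDerivAt_id θ).mul_const (Real.cos η)
    have := ((h2.div_const 2).add h3).div_const 2
    refine this.congr_deriv ?_
    have : Real.cos (2*θ - η) = Real.cos θ * Real.cos (θ - η) - Real.sin θ * Real.sin (θ - η) := by
      rw [show 2*θ - η = θ + (θ - η) by ring, Real.cos_add]
    have h6 : Real.cos η = Real.cos θ * Real.cos (θ - η) + Real.sin θ * Real.sin (θ - η) := by
      have := Real.cos_sub θ (θ - η)
      rw [show θ - (θ - η) = η by ring] at this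
      linarith
    linarith
  rw [intervalIntegral.integral_eq_sub_of_hasDerivAt hderiv (by
    apply Continuous.intervalIntegrable; fun_prop)]
  have e1 : 2*(π/2) - η = π - η := by ring
  have e2 : 2*(η - π/2) - η = -(π - η) := by ring
  rw [e1, e2, Real.sin_pi_sub, Real.sin_neg, Real.sin_pi_sub]
  ring

lemma angular (η : ℝ) (h0 : 0 ≤ η) (h1 : η ≤ π) :
    ∫ θ in (-π)..π, max (Real.cos θ) 0 * max (Real.cos (θ - η)) 0
      = ((π - η) * Real.cos η + Real.sin η)/2 := by
  have hπ := Real.pi_pos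
  have key : ∀ a b : ℝ, (-π) ≤ a → b ≤ π →
      (∀ θ, a ≤ θ → θ ≤ b → True) → True := fun _ _ _ _ _ => trivial
  have hab : (-π) ≤ η - π/2 := by linarith
  have hbc : η - π/2 ≤ π/2 := by linarith
  have hcd : (π/2:ℝ) ≤ π := by linarith
  have hcont : Continuous fun θ => max (Real.cos θ) 0 * max (Real.cos (θ - η)) 0 := by fun_prop
  have hint : ∀ a b : ℝ, IntervalIntegrable (fun θ => max (Real.cos θ) 0 * max (Real.cos (θ - η)) 0) volume a b :=
    fun a b => hcont.intervalIntegrable a b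
  rw [← intervalIntegral.integral_add_adjacent_intervals (b := η - π/2) (hint _ _) (hint _ _),
    ← intervalIntegral.integral_add_adjacent_intervals (a := η - π/2) (b := π/2) (hint _ _) (hint _ _)]
  have i1 : ∫ θ in (-π)..(η - π/2), max (Real.cos θ) 0 * max (Real.cos (θ - η)) 0 = 0 := by
    rw [intervalIntegral.integral_congr (g := fun _ => (0:ℝ)) ?_, intervalIntegral.integral_zero]
    intro θ hθ
    rw [Set.uIcc_of_le hab] at hθ
    obtain ⟨hθ1, hθ2⟩ := hθ
    rcases le_or_gt (Real.cos θ) 0 with h | h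
    · simp [max_eq_right h]
    · have hθ3 : -(π/2) < θ := by
        by_contra hc
        push_neg at hc
        have : Real.cos (-θ) ≤ 0 :=
          Real.cos_nonpos_of_pi_div_two_le_of_le (by linarith) (by linarith)
        rw [Real.cos_neg] at this; linarith
      have : Real.cos (-(θ - η)) ≤ 0 :=
        Real.cos_nonpos_of_pi_div_two_le_of_le (by linarith) (by linarith)
      rw [Real.cos_neg] at this
      simp [max_eq_right this]
  have i3 : ∫ θ in (π/2)..π, max (Real.cos θ) 0 * max (Real.cos (θ - η)) 0 = 0 := by
    rw [intervalIntegral.integral_congr (g := fun _ => (0:ℝ)) ?_, intervalIntegral.integral_zero]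
    intro θ hθ
    rw [Set.uIcc_of_le hcd] at hθ
    obtain ⟨hθ1, hθ2⟩ := hθ
    have : Real.cos θ ≤ 0 := Real.cos_nonpos_of_pi_div_two_le_of_le hθ1 (by linarith)
    simp [max_eq_right this]
  have i2 : ∫ θ in (η - π/2)..(π/2), max (Real.cos θ) 0 * max (Real.cos (θ - η)) 0
      = ((π - η) * Real.cos η + Real.sin η)/2 := by
    rw [← middle η]
    apply intervalIntegral.integral_congr
    intro θ hθ
    rw [Set.uIcc_of_le hbc] at hθ
    obtain ⟨hθ1, hθ2⟩ := hθ
    have c1 : 0 ≤ Real.cos θ := Real.cos_nonneg_of_mem_Icc ⟨by linarith, hθ2⟩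
    have c2 : 0 ≤ Real.cos (θ - η) := Real.cos_nonneg_of_mem_Icc ⟨by linarith, by linarith⟩
    simp [max_eq_left c1, max_eq_left c2]
  rw [i1, i2, i3]
  ring

lemma angular2 (p q : ℝ) (hpq : p^2 + q^2 = 1) (hq : 0 ≤ q) :
    ∫ θ in (-π)..π, max (Real.cos θ) 0 * max (p * Real.cos θ + q * Real.sin θ) 0
      = ((π - Real.arccos p) * p + Real.sin (Real.arccos p))/2 := by
  have hp1 : -1 ≤ p := by nlinarith
  have hp2 : p ≤ 1 := by nlinarith
  have hcos : Real.cos (Real.arccos p) = p := Real.cos_arccos hp1 hp2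
  have hsin : Real.sin (Real.arccos p) = q := by
    rw [Real.sin_arccos]
    rw [show 1 - p^2 = q^2 by linarith]
    exact Real.sqrt_sq hq
  have h := angular (Real.arccos p) (Real.arccos_nonneg p) (Real.arccos_le_pi p)
  rw [hcos] at h
  rw [← h]
  apply intervalIntegral.integral_congr
  intro θ _
  simp only [Real.cos_sub, hcos, hsin]
  ring_nf

lemma angular2' (p q : ℝ) (hpq : p^2 + q^2 = 1) :
    ∫ θ in (-π)..π, max (Real.cos θ) 0 * max (p * Real.cos θ + q * Real.sin θ) 0
      = ((π - Real.arccos p) * p + Real.sin (Real.arccos p))/2 := by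
  rcases le_or_gt 0 q with hq | hq
  · exact angular2 p q hpq hq
  · have key : (∫ θ in (-π)..π, max (Real.cos θ) 0 * max (p * Real.cos θ + (-q) * Real.sin θ) 0)
        = ((π - Real.arccos p) * p + Real.sin (Real.arccos p))/2 :=
      angular2 p (-q) (by nlinarith) (by linarith)
    rw [← key]
    have := intervalIntegral.integral_comp_neg (a := -π) (b := π)
      (fun θ => max (Real.cos θ) 0 * max (p * Real.cos θ + (-q) * Real.sin θ) 0)
    rw [neg_neg] at this
    rw [← this]
    apply intervalIntegral.integral_congr
    intro θ _
    simp only [Real.cos_neg, Real.sin_neg]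
    ring_nf

lemma angular3 (x0 x1 y0 y1 : ℝ) (hx : x0^2 + x1^2 = 1) (hy : y0^2 + y1^2 = 1) :
    ∫ θ in (-π)..π, max (x0 * Real.cos θ + x1 * Real.sin θ) 0
        * max (y0 * Real.cos θ + y1 * Real.sin θ) 0
      = ((π - Real.arccos (x0*y0 + x1*y1)) * (x0*y0 + x1*y1)
          + Real.sin (Real.arccos (x0*y0 + x1*y1)))/2 := by
  -- get angle α with cos α = x0, sin α = x1
  obtain ⟨α, hα1, hα2⟩ : ∃ α : ℝ, Real.cos α = x0 ∧ Real.sin α = x1 := by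
    have hz : (Complex.mk x0 x1 : ℂ) ≠ 0 := by
      intro h
      rw [Complex.ext_iff] at h
      simp at h
      obtain ⟨h1, h2⟩ := h
      rw [h1, h2] at hx; norm_num at hx
    have habs : ‖Complex.mk x0 x1‖ = 1 := by
      rw [Complex.norm_def, Complex.normSq_mk]
      rw [show x0*x0 + x1*x1 = 1 by nlinarith]
      exact Real.sqrt_one
    refine ⟨Complex.arg (Complex.mk x0 x1), ?_, ?_⟩
    · rw [Complex.cos_arg hz, habs]; simp
    · rw [Complex.sin_arg, habs]; simp
  set p := x0*y0 + x1*y1 with hp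
  set q := x0*y1 - x1*y0 with hq
  have hpq : p^2 + q^2 = 1 := by
    rw [hp, hq]; nlinarith
  set G := fun t : ℝ => max (Real.cos t) 0 * max (p * Real.cos t + q * Real.sin t) 0 with hG
  have hGper : Function.Periodic G (2*π) := by
    intro t
    simp [hG, Real.cos_add_two_pi, Real.sin_add_two_pi]
  have step1 : ∫ θ in (-π)..π, max (x0 * Real.cos θ + x1 * Real.sin θ) 0
        * max (y0 * Real.cos θ + y1 * Real.sin θ) 0 = ∫ θ in (-π)..π, G (θ - α) := by
    apply intervalIntegral.integral_congr
    intro θ _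
    have e1 : x0 * Real.cos θ + x1 * Real.sin θ = Real.cos (θ - α) := by
      rw [Real.cos_sub, hα1, hα2]; ring
    have e2 : y0 * Real.cos θ + y1 * Real.sin θ
        = p * Real.cos (θ - α) + q * Real.sin (θ - α) := by
      rw [Real.cos_sub, Real.sin_sub, hα1, hα2]
      linear_combination (-(y0 * Real.cos θ + y1 * Real.sin θ)) * hx
    simp only [hG]
    rw [e1, e2]
  rw [step1, intervalIntegral.integral_comp_sub_right (fun θ => G θ) α]
  have step2 : ∫ θ in (-π - α)..(π - α), G θ = ∫ θ in (-π)..π, G θ := by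
    have := hGper.intervalIntegral_add_eq (-π - α) (-π)
    rw [show -π - α + 2*π = π - α by ring, show -π + 2*π = π by ring] at this
    exact this
  rw [step2]
  exact angular2' p q hpq

lemma gauss_prod : (gaussianReal 0 1).prod (gaussianReal 0 1)
    = ((volume : Measure ℝ).prod volume).withDensity
        (fun p => ENNReal.ofReal (gaussianPDFReal 0 1 p.1 * gaussianPDFReal 0 1 p.2)) := by
  apply Measure.prod_eq
  intro s t hs ht
  rw [withDensity_apply _ (hs.prod ht), ← Measure.prod_restrict]
  have hmeq : ∀ p : ℝ × ℝ, ENNReal.ofReal (gaussianPDFReal 0 1 p.1 * gaussianPDFReal 0 1 p.2)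
      = ENNReal.ofReal (gaussianPDFReal 0 1 p.1) * ENNReal.ofReal (gaussianPDFReal 0 1 p.2) :=
    fun p => ENNReal.ofReal_mul (gaussianPDFReal_nonneg 0 1 p.1)
  simp_rw [hmeq]
  rw [lintegral_prod_mul
    ((measurable_gaussianPDFReal 0 1).ennreal_ofReal.aemeasurable)
    ((measurable_gaussianPDFReal 0 1).ennreal_ofReal.aemeasurable)]
  rw [gaussianReal_of_var_ne_zero 0 one_ne_zero, withDensity_apply _ hs, withDensity_apply _ ht]
  rfl


/-- For u standard Gaussian in ℝ² and unit vectors x, x' with angle η = arccos(xᵀx'),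
E[ReLU(uᵀx)ReLU(uᵀx')] = ((π − η)cos η + sin η)/(2π). -/
theorem stmt_9 (x x' : Fin 2 → ℝ) (hx : x ⬝ᵥ x = 1) (hx' : x' ⬝ᵥ x' = 1) :
    let η : ℝ := Real.arccos (x ⬝ᵥ x')
    ∫ u : Fin 2 → ℝ, (max (u ⬝ᵥ x) 0) * (max (u ⬝ᵥ x') 0)
        ∂(Measure.pi fun _ : Fin 2 => gaussianReal 0 1)
      = ((π - η) * Real.cos η + Real.sin η) / (2 * π) := by
  intro η
  have hπ := Real.pi_pos
  have hx2 : x 0 ^ 2 + x 1 ^ 2 = 1 := by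
    simpa [dotProduct, Fin.sum_univ_two, sq] using hx
  have hx'2 : x' 0 ^ 2 + x' 1 ^ 2 = 1 := by
    simpa [dotProduct, Fin.sum_univ_two, sq] using hx'
  have hd : x ⬝ᵥ x' = x 0 * x' 0 + x 1 * x' 1 := by
    simp [dotProduct, Fin.sum_univ_two]
  set d : ℝ := x 0 * x' 0 + x 1 * x' 1 with hdd
  have hd1 : -1 ≤ d ∧ d ≤ 1 := by
    constructor <;> nlinarith [sq_nonneg (x 0 * x' 1 - x 1 * x' 0), sq_nonneg (x 0 + x' 0),
      sq_nonneg (x 1 + x' 1), sq_nonneg (x 0 - x' 0), sq_nonneg (x 1 - x' 1)]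
  -- the density on ℝ × ℝ
  set F : ℝ × ℝ → ℝ := fun p => gaussianPDFReal 0 1 p.1 * gaussianPDFReal 0 1 p.2 with hF
  have hFmeas : Measurable F :=
    ((measurable_gaussianPDFReal 0 1).comp measurable_fst).mul
      ((measurable_gaussianPDFReal 0 1).comp measurable_snd)
  have hFnonneg : ∀ p, 0 ≤ F p := fun p =>
    mul_nonneg (gaussianPDFReal_nonneg 0 1 _) (gaussianPDFReal_nonneg 0 1 _)
  set g : ℝ × ℝ → ℝ := fun p => max (p.1 * x 0 + p.2 * x 1) 0 * max (p.1 * x' 0 + p.2 * x' 1) 0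
    with hg
  -- step 1 : transfer to ℝ × ℝ
  have h1 : ∫ u : Fin 2 → ℝ, (max (u ⬝ᵥ x) 0) * (max (u ⬝ᵥ x') 0)
        ∂(Measure.pi fun _ : Fin 2 => gaussianReal 0 1)
      = ∫ p : ℝ × ℝ, g p ∂((gaussianReal 0 1).prod (gaussianReal 0 1)) := by
    rw [← (measurePreserving_finTwoArrow (gaussianReal 0 1)).integral_comp
      (MeasurableEquiv.measurableEmbedding _) g]
    congr 1
    funext u
    simp [hg, dotProduct, Fin.sum_univ_two]
  rw [h1, gauss_prod]
  -- step 2 : withDensity to weighted integral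
  have h2 : ∫ p : ℝ × ℝ, g p ∂(((volume : Measure ℝ).prod volume).withDensity
        (fun p => ENNReal.ofReal (F p)))
      = ∫ p : ℝ × ℝ, F p * g p ∂((volume : Measure ℝ).prod volume) := by
    have : (fun p : ℝ × ℝ => ENNReal.ofReal (F p))
        = fun p => ((F p).toNNReal : ENNReal) := rfl
    rw [this, integral_withDensity_eq_integral_smul hFmeas.real_toNNReal g]
    congr 1
    funext p
    rw [NNReal.smul_def, Real.coe_toNNReal _ (hFnonneg p), smul_eq_mul]
  rw [h2, ← Measure.volume_eq_prod, ← integral_comp_polarCoord_symm (fun p => F p * g p)]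
  -- step 3 : evaluate on the polar target
  set f₁ : ℝ → ℝ := fun r => (2*π)⁻¹ * (r^3 * Real.exp (-(r^2/2))) with hf₁
  set f₂ : ℝ → ℝ := fun θ => max (x 0 * Real.cos θ + x 1 * Real.sin θ) 0
      * max (x' 0 * Real.cos θ + x' 1 * Real.sin θ) 0 with hf₂
  have h3 : ∫ p in polarCoord.target, p.1 • (F (polarCoord.symm p) * g (polarCoord.symm p))
      = ∫ p in polarCoord.target, f₁ p.1 * f₂ p.2 := by
    apply setIntegral_congr_fun polarCoord.open_target.measurableSet
    rintro ⟨r, θ⟩ hp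
    rw [polarCoord_target] at hp
    obtain ⟨hr, hθ⟩ := hp
    simp only [Set.mem_Ioi] at hr
    dsimp only
    have hsymm : polarCoord.symm (r, θ) = (r * Real.cos θ, r * Real.sin θ) := rfl
    rw [hsymm]
    have hFr : F (r * Real.cos θ, r * Real.sin θ) = (2*π)⁻¹ * Real.exp (-(r^2/2)) := by
      rw [hF]
      dsimp only
      rw [pdf_mul]
      rw [show (r * Real.cos θ)^2 + (r * Real.sin θ)^2 = r^2 from by
        linear_combination r^2 * Real.sin_sq_add_cos_sq θ]
    have hgr : g (r * Real.cos θ, r * Real.sin θ) = r^2 * f₂ θ := by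
      rw [hg, hf₂]
      dsimp only
      rw [show r * Real.cos θ * x 0 + r * Real.sin θ * x 1
          = r * (x 0 * Real.cos θ + x 1 * Real.sin θ) from by ring,
        show r * Real.cos θ * x' 0 + r * Real.sin θ * x' 1
          = r * (x' 0 * Real.cos θ + x' 1 * Real.sin θ) from by ring,
        relu_mul _ _ hr.le, relu_mul _ _ hr.le]
      ring
    rw [hFr, hgr, smul_eq_mul, hf₁]
    ring
  rw [h3, polarCoord_target, Measure.volume_eq_prod, ← Measure.prod_restrict,
    MeasureTheory.integral_prod_mul]
  have hrad : ∫ r in Set.Ioi (0:ℝ), f₁ r = (2*π)⁻¹ * 2 := by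
    rw [hf₁, MeasureTheory.integral_const_mul, radial]
  have hang : ∫ θ in Set.Ioo (-π) π, f₂ θ = ((π - η) * Real.cos η + Real.sin η)/2 := by
    rw [← MeasureTheory.integral_Ioc_eq_integral_Ioo,
      ← intervalIntegral.integral_of_le (by linarith)]
    have := angular3 (x 0) (x 1) (x' 0) (x' 1) hx2 hx'2
    rw [hf₂]
    rw [this]
    have hη : η = Real.arccos d := by rw [show η = Real.arccos (x ⬝ᵥ x') from rfl, hd]
    rw [← hdd, ← hη, show Real.cos η = d from by rw [hη]; exact Real.cos_arccos hd1.1 hd1.2]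
  rw [hrad, hang]
  field_simp
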